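/- Every connected graph with independence number at most 2 has a Hamiltonian path. -/

import Mathlib

/-- A linear coloring: every path in `G` contains a vertex whose color appears
exactly once on the path. -/
def IsLinearColoring {V C : Type*} [DecidableEq C] (G : SimpleGraph V) (ψ : V → C) : Prop :=
  ∀ ⦃u v : V⦄ (p : G.Walk u v), p.IsPath →
    ∃ w ∈ p.support, (p.support.map ψ).count (ψ w) = 1

/-- A centered coloring: every nonempty vertex set inducing a connected subgraph
contains a vertex whose color appears exactly once in the set. -/
def IsCenteredColoring {V C : Type*} [DecidableEq C] (G : SimpleGraph V) (φ : V → C) : Prop :=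
  ∀ S : Finset V, S.Nonempty → (G.induce (S : Set V)).Connected →
    ∃ w ∈ S, (S.filter (fun x => φ x = φ w)).card = 1

/-- The linear coloring number: minimum number of colors of a linear coloring. -/
noncomputable def chiLin {V : Type*} (G : SimpleGraph V) : ℕ :=
  sInf {k | ∃ ψ : V → Fin k, IsLinearColoring G ψ}

/-- The centered coloring number: minimum number of colors of a centered coloring. -/
noncomputable def chiCen {V : Type*} (G : SimpleGraph V) : ℕ :=
  sInf {k | ∃ φ : V → Fin k, IsCenteredColoring G φ}

/-- A treedepth decomposition of `G`: a rooted forest on the vertices of `G`,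
given by its ancestor relation `anc` (a partial order whose down-sets are chains),
such that every edge of `G` joins an ancestor-descendant pair. -/
structure TreedepthDecomp {V : Type*} (G : SimpleGraph V) where
  anc : V → V → Prop
  refl : ∀ v, anc v v
  antisymm : ∀ u v, anc u v → anc v u → u = v
  trans : ∀ u v w, anc u v → anc v w → anc u w
  chain : ∀ u v w, anc u w → anc v w → anc u v ∨ anc v u
  edge : ∀ u v, G.Adj u v → anc u v ∨ anc v u

/-- The decomposition has depth at most `k`: every ancestor-descendant chain has
at most `k` vertices. -/
def TreedepthDecomp.depthLE {V : Type*} {G : SimpleGraph V} (d : TreedepthDecomp G)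
    (k : ℕ) : Prop :=
  ∀ s : Finset V, (∀ a ∈ s, ∀ b ∈ s, d.anc a b ∨ d.anc b a) → s.card ≤ k

/-- The treedepth of `G`: minimum depth of a treedepth decomposition. -/
noncomputable def treedepth {V : Type*} (G : SimpleGraph V) : ℕ :=
  sInf {k | ∃ d : TreedepthDecomp G, d.depthLE k}

open SimpleGraph

private lemma loop_path_nil {V : Type*} {G : SimpleGraph V} {u : V} {p : G.Walk u u}
    (hp : p.IsPath) : p = Walk.nil := by
  cases p with
  | nil => rfl
  | cons h q =>
    exfalso
    have hn := hp.support_nodup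
    rw [Walk.support_cons, List.nodup_cons] at hn
    exact hn.1 q.end_mem_support

private lemma extend_path {V : Type*} [Fintype V] [DecidableEq V]
    (G : SimpleGraph V) (hconn : G.Connected)
    (hind : ∀ s : Finset V, (∀ a ∈ s, ∀ b ∈ s, a ≠ b → ¬ G.Adj a b) → s.card ≤ 2)
    {u v : V} (p : G.Walk u v) (hp : p.IsPath) {x : V} (hx : x ∉ p.support) :
    ∃ (a b : V) (q : G.Walk a b), q.IsPath ∧ q.length = p.length + 1 := by
  classical
  -- boundary edge from outside the support into the support
  obtain ⟨w⟩ := hconn.preconnected x u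
  obtain ⟨d, -, hd1, hd2⟩ := w.exists_boundary_dart {t | t ∉ p.support} hx
    (by simp [p.start_mem_support])
  set y := d.fst with hy
  set z := d.snd with hz
  have hyz : G.Adj y z := d.adj
  have hyS : y ∉ p.support := hd1
  have hzS : z ∈ p.support := not_not.mp hd2
  by_cases hzu : z = u
  · subst hzu
    exact ⟨y, v, Walk.cons hyz p, hp.cons hyS, by simp⟩
  by_cases hzv : z = v
  · subst hzv
    refine ⟨y, u, Walk.cons hyz p.reverse, hp.reverse.cons ?_, by simp⟩
    rw [Walk.support_reverse, List.mem_reverse]; exact hyS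
  -- now z is an internal vertex of p; get the edge u-v
  have hne_uv : u ≠ v := by
    intro h; subst h
    rw [loop_path_nil hp, Walk.support_nil, List.mem_singleton] at hzS
    exact hzu hzS
  have hxu : x ≠ u := fun h => hx (h ▸ p.start_mem_support)
  have hxv : x ≠ v := fun h => hx (h ▸ p.end_mem_support)
  by_cases hAu : G.Adj x u
  · exact ⟨x, v, Walk.cons hAu p, hp.cons hx, by simp⟩
  by_cases hAv : G.Adj x v
  · refine ⟨x, u, Walk.cons hAv p.reverse, hp.reverse.cons ?_, by simp⟩
    rw [Walk.support_reverse, List.mem_reverse]; exact hx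
  have huv : G.Adj u v := by
    by_contra hA
    have h3 : ({u, v, x} : Finset V).card = 3 := by
      rw [Finset.card_insert_of_notMem (by simp [hne_uv, Ne.symm hxu]),
        Finset.card_insert_of_notMem (by simp [Ne.symm hxv])]
      simp
    have := hind {u, v, x} ?_
    · omega
    intro a ha b hb hab
    simp only [Finset.mem_insert, Finset.mem_singleton] at ha hb
    rcases ha with rfl | rfl | rfl <;> rcases hb with rfl | rfl | rfl <;>
      first
      | exact absurd rfl hab
      | exact hA
      | exact fun h => hA h.symm
      | exact hAu
      | exact fun h => hAu h.symm
      | exact hAv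
      | exact fun h => hAv h.symm
  -- split p at z and rotate
  set p₁ := p.takeUntil z hzS with hp₁def
  set p₂ := p.dropUntil z hzS with hp₂def
  have hp₁ : p₁.IsPath := hp.takeUntil hzS
  have hp₂ : p₂.IsPath := hp.dropUntil hzS
  have hspec : p₁.append p₂ = p := p.take_spec hzS
  obtain ⟨b, hzb, q, hrev⟩ := Walk.exists_eq_cons_of_ne hzu p₁.reverse
  refine ⟨y, b, Walk.cons hyz (p₂.append (Walk.cons huv.symm q.reverse)), ?_, ?_⟩
  · -- path
    rw [Walk.isPath_def, Walk.support_cons, Walk.support_append, Walk.support_cons]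
    simp only [List.tail_cons]
    have hsupp1 : p₁.reverse.support = z :: q.support := by rw [hrev, Walk.support_cons]
    have hqp₁ : ∀ t ∈ q.support, t ∈ p₁.support := by
      intro t ht
      have : t ∈ p₁.reverse.support := by rw [hsupp1]; exact List.mem_cons_of_mem _ ht
      rwa [Walk.support_reverse, List.mem_reverse] at this
    have hqnodup : q.support.Nodup ∧ z ∉ q.support := by
      have := hp₁.reverse.support_nodup
      rw [hsupp1, List.nodup_cons] at this
      exact ⟨this.2, this.1⟩
    have hdisj : ∀ t ∈ p₁.support, t ∈ p₂.support.tail → False := by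
      have := hp.support_nodup
      rw [← hspec, Walk.support_append, List.nodup_append] at this
      exact fun t ht ht' => this.2.2 t ht t ht' rfl
    rw [List.nodup_cons]
    constructor
    · rw [List.mem_append]
      rintro (h | h)
      · exact hyS (p.support_dropUntil_subset hzS h)
      · rw [Walk.support_reverse, List.mem_reverse] at h
        exact hyS (p.support_takeUntil_subset hzS (hqp₁ _ h))
    · rw [List.nodup_append]
      refine ⟨hp₂.support_nodup, by rw [Walk.support_reverse]; exact List.nodup_reverse.mpr hqnodup.1, ?_⟩
      intro t ht t' ht' htt'; subst htt'
      rw [Walk.support_reverse, List.mem_reverse] at ht'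
      rw [p₂.support_eq_cons, List.mem_cons] at ht
      rcases ht with rfl | ht
      · exact hqnodup.2 ht'
      · exact hdisj t (hqp₁ _ ht') ht
  · -- length
    have h1 : p₁.length + p₂.length = p.length := by
      rw [← hspec, Walk.length_append]
    have h2 : p₁.length = q.length + 1 := by
      have := congrArg Walk.length hrev
      rwa [Walk.length_reverse, Walk.length_cons] at this
    simp only [Walk.length_cons, Walk.length_append, Walk.length_reverse]
    omega


/-- Every connected graph with independence number at most `2`
has a Hamiltonian path. -/
theorem hamiltonianPath_of_independenceNumber_le_two {V : Type*} [Fintype V] [DecidableEq V]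
    (G : SimpleGraph V) (hconn : G.Connected)
    (hind : ∀ s : Finset V, (∀ a ∈ s, ∀ b ∈ s, a ≠ b → ¬ G.Adj a b) → s.card ≤ 2) :
    ∃ (u v : V) (p : G.Walk u v), p.IsHamiltonian := by
  classical
  have hne : Nonempty V := hconn.nonempty
  obtain ⟨v₀⟩ := hne
  set N : Set ℕ := {n | ∃ (a b : V) (q : G.Walk a b), q.IsPath ∧ q.length = n} with hN
  have hN0 : (0 : ℕ) ∈ N := ⟨v₀, v₀, Walk.nil, Walk.IsPath.nil, rfl⟩
  have hbdd : BddAbove N := by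
    refine ⟨Fintype.card V, fun n hn => ?_⟩
    obtain ⟨a, b, q, hq, rfl⟩ := hn
    exact hq.length_lt.le
  obtain ⟨a, b, p, hp, hlen⟩ := Nat.sSup_mem ⟨0, hN0⟩ hbdd
  have hall : ∀ x, x ∈ p.support := by
    intro x
    by_contra hx
    obtain ⟨a', b', q, hq, hq'⟩ := extend_path G hconn hind p hp hx
    have : q.length ∈ N := ⟨a', b', q, hq, rfl⟩
    have := le_csSup hbdd this
    omega
  exact ⟨a, b, p, fun x => List.count_eq_one_of_mem hp.support_nodup (hall x)⟩
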